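/- Let G be a rainbow C_4-saturated graph with vertex set V and let D ⊆ V be a dominating set. For a connected component C of G[V∖D], let f(C) be the number of edges of G with at least one endpoint in V(C); call C sparse if f(C) = 2|V(C)| − 1. Let L be the set of vertices that lie in some sparse component and have degree exactly 2 in G. Then there exists a set S ⊆ D with |S| ≤ 35 such that either (1) every vertex of L has a neighbor in S (L ⊆ N(S)), or (2) every sparse component C of G[V∖D] with V(C) ⊄ N(S) satisfies |V(C) ∩ N(S)| ≥ 5. -/

import Mathlib

/-- A proper edge-coloring: any two distinct edges of `G` sharing a vertex
receive different colors. -/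
def ProperEdgeColoring {V : Type*} (G : SimpleGraph V) (c : Sym2 V → ℕ) : Prop :=
  ∀ e₁ ∈ G.edgeSet, ∀ e₂ ∈ G.edgeSet, e₁ ≠ e₂ → (∃ v, v ∈ e₁ ∧ v ∈ e₂) → c e₁ ≠ c e₂

/-- `G` contains a rainbow copy of the cycle `C_k` under the edge-coloring `c`:
there are `k` distinct vertices, cyclically consecutive ones adjacent, whose
`k` cycle edges receive pairwise distinct colors. -/
def HasRainbowCycle {V : Type*} (G : SimpleGraph V) (c : Sym2 V → ℕ) (k : ℕ) : Prop :=
  ∃ f : ZMod k → V, Function.Injective f ∧ (∀ i, G.Adj (f i) (f (i + 1))) ∧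
    Function.Injective (fun i : ZMod k => c s(f i, f (i + 1)))

/-- `G` is (properly) rainbow `C_k`-saturated: some proper edge-coloring of `G`
has no rainbow `C_k`-copy, but for every pair of nonadjacent vertices `x, y`,
every proper edge-coloring of `G + xy` contains a rainbow `C_k`-copy. -/
def RainbowSat {V : Type*} (G : SimpleGraph V) (k : ℕ) : Prop :=
  (∃ c, ProperEdgeColoring G c ∧ ¬ HasRainbowCycle G c k) ∧
  ∀ x y : V, x ≠ y → ¬ G.Adj x y →
    ∀ c, ProperEdgeColoring (G ⊔ SimpleGraph.fromEdgeSet {s(x, y)}) c →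
      HasRainbowCycle (G ⊔ SimpleGraph.fromEdgeSet {s(x, y)}) c k

/-- The subgraph of `G` on the same vertex set keeping only the edges with both
endpoints in `A` (used to model the induced subgraph `G[A]`). -/
def restrictTo {V : Type*} (G : SimpleGraph V) (A : Set V) : SimpleGraph V :=
  SimpleGraph.fromRel (fun x y => G.Adj x y ∧ x ∈ A ∧ y ∈ A)

/-- The vertex set of the connected component of `x` in the graph `H`. -/
def compOf {V : Type*} (H : SimpleGraph V) (x : V) : Set V := {y | H.Reachable x y}

/-- `f(C)`: the number of edges of `G` with at least one endpoint in `C`. -/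
noncomputable def edgesTouching {V : Type*} (G : SimpleGraph V) (C : Set V) : ℕ :=
  {e | e ∈ G.edgeSet ∧ ∃ w ∈ C, w ∈ e}.ncard

/-- A component `C` of `G[V ∖ D]` is sparse if `f(C) = 2|V(C)| − 1`. -/
def SparseComp {V : Type*} (G : SimpleGraph V) (C : Set V) : Prop :=
  edgesTouching G C + 1 = 2 * C.ncard

/-- `L`: the set of vertices lying in some sparse component of `G[V ∖ D]` that
have degree exactly 2 in `G`. -/
def Lset {V : Type*} (G : SimpleGraph V) (D : Set V) : Set V :=
  {w | w ∉ D ∧ SparseComp G (compOf (restrictTo G Dᶜ) w) ∧ (G.neighborSet w).ncard = 2}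

namespace Claim7


variable {V : Type*}

lemma restrict_adj (G : SimpleGraph V) (D : Set V) {u v : V} :
    (restrictTo G Dᶜ).Adj u v ↔ G.Adj u v ∧ u ∉ D ∧ v ∉ D := by
  unfold restrictTo
  rw [SimpleGraph.fromRel_adj]
  constructor
  · rintro ⟨hne, h | h⟩
    · exact ⟨h.1, h.2.1, h.2.2⟩
    · exact ⟨h.1.symm, h.2.2, h.2.1⟩
  · rintro ⟨h, hu, hv⟩
    exact ⟨h.ne, Or.inl ⟨h, hu, hv⟩⟩

lemma self_mem_compOf (H : SimpleGraph V) (x : V) : x ∈ compOf H x := SimpleGraph.Reachable.refl x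

lemma mem_compOf {H : SimpleGraph V} {x y : V} : y ∈ compOf H x ↔ H.Reachable x y := Iff.rfl

lemma compOf_eq {H : SimpleGraph V} {x y : V} (h : H.Reachable x y) :
    compOf H x = compOf H y :=
  Set.ext fun _ => ⟨fun hz => h.symm.trans hz, fun hz => h.trans hz⟩

lemma adj_mem_compOf {H : SimpleGraph V} {x u v : V} (hu : u ∈ compOf H x) (h : H.Adj u v) :
    v ∈ compOf H x := SimpleGraph.Reachable.trans hu h.reachable

lemma walk_not_mem {G : SimpleGraph V} {D : Set V} {x y : V}
    (w : (restrictTo G Dᶜ).Walk x y) (hx : x ∉ D) : y ∉ D := by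
  induction w with
  | nil => exact hx
  | cons h p ih => exact ih (((restrict_adj G D).mp h).2.2)

lemma compOf_subset_compl {G : SimpleGraph V} {D : Set V} {x : V} (hx : x ∉ D) :
    ∀ y ∈ compOf (restrictTo G Dᶜ) x, y ∉ D := by
  intro y hy
  obtain ⟨w⟩ := (mem_compOf.mp hy)
  exact walk_not_mem w hx


lemma inj4 (g : ZMod 4 → ℕ) (h01 : g 0 ≠ g 1) (h02 : g 0 ≠ g 2) (h03 : g 0 ≠ g 3)
    (h12 : g 1 ≠ g 2) (h13 : g 1 ≠ g 3) (h23 : g 2 ≠ g 3) : Function.Injective g := by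
  intro a b hab
  fin_cases a <;> fin_cases b <;> first | rfl | (exfalso; first | exact h01 hab | exact h02 hab | exact h03 hab | exact h12 hab | exact h13 hab | exact h23 hab | exact h01 hab.symm | exact h02 hab.symm | exact h03 hab.symm | exact h12 hab.symm | exact h13 hab.symm | exact h23 hab.symm)

lemma proper_ne (G : SimpleGraph V) {c : Sym2 V → ℕ} (hc : ProperEdgeColoring G c)
    {a b b' : V} (h1 : G.Adj a b) (h2 : G.Adj a b') (hbb : b ≠ b') :
    c s(a, b) ≠ c s(a, b') := by
  refine hc _ (G.mem_edgeSet.mpr h1) _ (G.mem_edgeSet.mpr h2) ?_ ⟨a, by simp, by simp⟩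
  intro h
  rcases Sym2.eq_iff.mp h with ⟨-, h'⟩ | ⟨h', h''⟩
  · exact hbb h'
  · rw [← h'] at h2; exact G.irrefl h2

lemma rainbow_cycle_of_four (G : SimpleGraph V) (c : Sym2 V → ℕ) (hc : ProperEdgeColoring G c)
    {u x v y : V} (hux : G.Adj u x) (hxv : G.Adj x v) (hvy : G.Adj v y) (hyu : G.Adj y u)
    (huv : u ≠ v) (hxy : x ≠ y)
    (h02 : c s(u, x) ≠ c s(v, y)) (h13 : c s(x, v) ≠ c s(y, u)) :
    HasRainbowCycle G c 4 := by
  classical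
  have c01 : c s(u, x) ≠ c s(x, v) := by
    have := proper_ne G hc hux.symm hxv huv
    rwa [Sym2.eq_swap (a := x) (b := u)] at this
  have c12 : c s(x, v) ≠ c s(v, y) := by
    have := proper_ne G hc hxv.symm hvy hxy
    rwa [Sym2.eq_swap (a := v) (b := x)] at this
  have c23 : c s(v, y) ≠ c s(y, u) := by
    have := proper_ne G hc hvy.symm hyu huv.symm
    rwa [Sym2.eq_swap (a := y) (b := v)] at this
  have c03 : c s(u, x) ≠ c s(y, u) := by
    have := proper_ne G hc hux hyu.symm hxy
    rwa [Sym2.eq_swap (a := u) (b := y)] at this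
  refine ⟨![u, x, v, y], ?_, ?_, ?_⟩
  · intro a b hab
    fin_cases a <;> fin_cases b <;>
      first
        | rfl
        | (exfalso; revert hab; simp [hux.ne, hxv.ne, hvy.ne, hyu.ne, huv, hxy,
            hux.ne.symm, hxv.ne.symm, hvy.ne.symm, hyu.ne.symm, huv.symm, hxy.symm])
  · intro i
    fin_cases i
    · exact hux
    · exact hxv
    · exact hvy
    · exact hyu
  · exact inj4 _ c01 h02 c03 c12 h13 c23

lemma rainbow_of_common (G : SimpleGraph V) (c : Sym2 V → ℕ) (hc : ProperEdgeColoring G c)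
    {u v x1 x2 x3 x4 : V} (huv : u ≠ v)
    (h12 : x1 ≠ x2) (h13 : x1 ≠ x3) (h14 : x1 ≠ x4) (h23 : x2 ≠ x3) (h24 : x2 ≠ x4)
    (h34 : x3 ≠ x4)
    (hu1 : G.Adj u x1) (hu2 : G.Adj u x2) (hu3 : G.Adj u x3) (hu4 : G.Adj u x4)
    (hv1 : G.Adj v x1) (hv2 : G.Adj v x2) (hv3 : G.Adj v x3) (hv4 : G.Adj v x4) :
    HasRainbowCycle G c 4 := by
  classical
  have key : ∃ w, x1 ≠ w ∧ G.Adj u w ∧ G.Adj v w ∧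
      c s(u, x1) ≠ c s(v, w) ∧ c s(u, w) ≠ c s(v, x1) := by
    by_contra h
    push_neg at h
    have H : ∀ w, x1 ≠ w → G.Adj u w → G.Adj v w →
        (c s(u, x1) = c s(v, w) ∨ c s(u, w) = c s(v, x1)) := by
      intro w hw hu hv
      by_cases hA : c s(u, x1) = c s(v, w)
      · exact Or.inl hA
      · exact Or.inr (not_ne_iff.mp fun hB => hB (h w hw hu hv hA))
    rcases H x2 h12 hu2 hv2 with A2 | B2 <;> rcases H x3 h13 hu3 hv3 with A3 | B3 <;>
      rcases H x4 h14 hu4 hv4 with A4 | B4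
    · exact proper_ne G hc hv2 hv3 h23 (A2 ▸ A3)
    · exact proper_ne G hc hv2 hv3 h23 (A2 ▸ A3)
    · exact proper_ne G hc hv2 hv4 h24 (A2 ▸ A4)
    · exact proper_ne G hc hu3 hu4 h34 (B3.trans B4.symm)
    · exact proper_ne G hc hv3 hv4 h34 (A3 ▸ A4)
    · exact proper_ne G hc hu2 hu4 h24 (B2.trans B4.symm)
    · exact proper_ne G hc hu2 hu3 h23 (B2.trans B3.symm)
    · exact proper_ne G hc hu2 hu3 h23 (B2.trans B3.symm)
  obtain ⟨w, hxw, huw, hvw, hA, hB⟩ := key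
  refine rainbow_cycle_of_four G c hc hu1 hv1.symm hvw huw.symm huv hxw hA ?_
  rw [Sym2.eq_swap (a := x1) (b := v), Sym2.eq_swap (a := w) (b := u)]
  exact fun hh => hB hh.symm

lemma path3 [Fintype V] (G : SimpleGraph V) (hG : RainbowSat G 4) {x y : V}
    (hne : x ≠ y) (hnadj : ¬ G.Adj x y) :
    ∃ u v : V, G.Adj x u ∧ G.Adj u v ∧ G.Adj v y := by
  classical
  obtain ⟨c, hc, hnc⟩ := hG.1
  set N : ℕ := (G.edgeFinset.sup c) + 1 with hN
  set c' : Sym2 V → ℕ := fun e => if e = s(x, y) then N else c e with hc'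
  have hxy_not : s(x, y) ∉ G.edgeSet := fun h => hnadj (G.mem_edgeSet.mp h)
  have hc'eq : ∀ e ∈ G.edgeSet, c' e = c e := by
    intro e he
    simp only [hc']
    rw [if_neg]
    rintro rfl; exact hxy_not he
  have hc'lt : ∀ e ∈ G.edgeSet, c' e < N := by
    intro e he
    rw [hc'eq e he, hN]
    have : c e ≤ G.edgeFinset.sup c := Finset.le_sup (SimpleGraph.mem_edgeFinset.mpr he)
    omega
  have hmem : ∀ {a b : V}, (G ⊔ SimpleGraph.fromEdgeSet {s(x, y)}).Adj a b ↔
      G.Adj a b ∨ (s(a, b) = s(x, y) ∧ a ≠ b) := by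
    intro a b
    rw [SimpleGraph.sup_adj, SimpleGraph.fromEdgeSet_adj]
    simp
  have hproper : ProperEdgeColoring (G ⊔ SimpleGraph.fromEdgeSet {s(x, y)}) c' := by
    intro e1 he1 e2 he2 hne12 hsh
    rw [SimpleGraph.edgeSet_sup, SimpleGraph.edgeSet_fromEdgeSet] at he1 he2
    have hcase : ∀ e, e ∈ G.edgeSet ∪ ({s(x, y)} \ {e : Sym2 V | e.IsDiag}) →
        e ∈ G.edgeSet ∨ e = s(x, y) := by
      intro e he
      rcases he with he | he
      · exact Or.inl he
      · exact Or.inr he.1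
    rcases hcase e1 he1 with h1 | rfl
    · rcases hcase e2 he2 with h2 | rfl
      · rw [hc'eq e1 h1, hc'eq e2 h2]; exact hc e1 h1 e2 h2 hne12 hsh
      · rw [hc'eq e1 h1]
        have : c' s(x, y) = N := by simp [hc']
        rw [this]
        have hlt := hc'lt e1 h1
        rw [hc'eq e1 h1] at hlt
        omega
    · rcases hcase e2 he2 with h2 | rfl
      · have : c' s(x, y) = N := by simp [hc']
        rw [this, hc'eq e2 h2]
        have hlt := hc'lt e2 h2
        rw [hc'eq e2 h2] at hlt
        omega
      · exact absurd rfl hne12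
  have hrb := hG.2 x y hne hnadj c' hproper
  obtain ⟨f, hfi, hfa, hfc⟩ := hrb
  by_cases hall : ∀ i : ZMod 4, s(f i, f (i + 1)) ≠ s(x, y)
  · exfalso
    apply hnc
    have hadjG : ∀ i, G.Adj (f i) (f (i + 1)) := by
      intro i
      rcases hmem.mp (hfa i) with h | h
      · exact h
      · exact absurd h.1 (hall i)
    refine ⟨f, hfi, hadjG, ?_⟩
    have : (fun i : ZMod 4 => c s(f i, f (i + 1))) =
        (fun i : ZMod 4 => c' s(f i, f (i + 1))) := by
      funext i
      rw [hc'eq _ (G.mem_edgeSet.mpr (hadjG i))]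
    rw [this]
    exact hfc
  · push_neg at hall
    obtain ⟨k, hk⟩ := hall
    -- distinctness facts in ZMod 4
    have z1 : k + 1 ≠ k := fun h => by have := add_eq_left.mp h; exact absurd this (by decide)
    have z2 : k + 2 ≠ k := fun h => by have := add_eq_left.mp h; exact absurd this (by decide)
    have z3 : k + 3 ≠ k := fun h => by have := add_eq_left.mp h; exact absurd this (by decide)
    have z21 : k + 2 ≠ k + 1 := fun h => by have := (add_right_inj k).mp h; exact absurd this (by decide)
    have z31 : k + 3 ≠ k + 1 := fun h => by have := (add_right_inj k).mp h; exact absurd this (by decide)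
    have z32 : k + 3 ≠ k + 2 := fun h => by have := (add_right_inj k).mp h; exact absurd this (by decide)
    have hk4 : k + 3 + 1 = k := by
      rw [add_assoc, show (3 + 1 : ZMod 4) = 0 by decide, add_zero]
    -- the cycle visits x,y at positions k, k+1
    have hmemk : f k = x ∧ f (k + 1) = y ∨ f k = y ∧ f (k + 1) = x := by
      rcases Sym2.eq_iff.mp hk with ⟨h1, h2⟩ | ⟨h1, h2⟩
      · exact Or.inl ⟨h1, h2⟩
      · exact Or.inr ⟨h1, h2⟩
    -- the other three edges are G-edges
    have hedge1 : G.Adj (f (k + 1)) (f (k + 1 + 1)) := by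
      rcases hmem.mp (hfa (k + 1)) with h | h
      · exact h
      · exfalso
        have h12 : s(f (k + 1), f (k + 1 + 1)) = s(f k, f (k + 1)) := h.1.trans hk.symm
        rcases Sym2.eq_iff.mp h12 with ⟨h1, h2⟩ | ⟨h1, h2⟩
        · exact z1 (hfi h1)
        · exact z2 (by rw [show k + 1 + 1 = k + 2 by ring] at h2; exact hfi h2)
    have hedge2 : G.Adj (f (k + 2)) (f (k + 2 + 1)) := by
      rcases hmem.mp (hfa (k + 2)) with h | h
      · exact h
      · exfalso
        have h12 : s(f (k + 2), f (k + 2 + 1)) = s(f k, f (k + 1)) := h.1.trans hk.symm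
        rcases Sym2.eq_iff.mp h12 with ⟨h1, h2⟩ | ⟨h1, h2⟩
        · exact z2 (hfi h1)
        · exact z21 (hfi h1)
    have hedge3 : G.Adj (f (k + 3)) (f k) := by
      have := hfa (k + 3)
      rw [hk4] at this
      rcases hmem.mp this with h | h
      · exact h
      · exfalso
        have h12 : s(f (k + 3), f k) = s(f k, f (k + 1)) := h.1.trans hk.symm
        rcases Sym2.eq_iff.mp h12 with ⟨h1, h2⟩ | ⟨h1, h2⟩
        · exact z3 (hfi h1)
        · exact z31 (hfi h1)
    have e12 : G.Adj (f (k + 1)) (f (k + 2)) := by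
      rw [show k + 1 + 1 = k + 2 by ring] at hedge1; exact hedge1
    have e23 : G.Adj (f (k + 2)) (f (k + 3)) := by
      rw [show k + 2 + 1 = k + 3 by ring] at hedge2; exact hedge2
    rcases hmemk with ⟨hx', hy'⟩ | ⟨hx', hy'⟩
    · -- f k = x, f (k+1) = y : path x = f k ~ f(k+3) ~ f(k+2) ~ f(k+1) = y
      exact ⟨f (k + 3), f (k + 2), by rw [← hx']; exact hedge3.symm, e23.symm,
        by rw [← hy']; exact e12.symm⟩
    · -- f k = y, f (k+1) = x : path x = f(k+1) ~ f(k+2) ~ f(k+3) ~ f k = y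
      exact ⟨f (k + 2), f (k + 3), by rw [← hy']; exact e12, e23,
        by rw [← hx']; exact hedge3⟩

noncomputable def rootOf [Nonempty V] (C : Set V) : V := Classical.epsilon (· ∈ C)

noncomputable def pr [Nonempty V] (G : SimpleGraph V) (D : Set V) (x : V) : ℕ :=
  (restrictTo G Dᶜ).dist (rootOf (compOf (restrictTo G Dᶜ) x)) x % 2

lemma sparse_struct [Fintype V] [Nonempty V] (G : SimpleGraph V) (D : Set V)
    (hD : ∀ v, v ∈ D ∨ ∃ u ∈ D, G.Adj u v) {x₀ : V} (hx₀ : x₀ ∉ D)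
    (hsp : SparseComp G (compOf (restrictTo G Dᶜ) x₀)) :
    (∀ v ∈ compOf (restrictTo G Dᶜ) x₀, ∀ d₁ ∈ D, ∀ d₂ ∈ D,
        G.Adj d₁ v → G.Adj d₂ v → d₁ = d₂) ∧
    (∀ a b, a ∈ compOf (restrictTo G Dᶜ) x₀ → (restrictTo G Dᶜ).Adj a b →
        pr G D a ≠ pr G D b) := by
  classical
  set H := restrictTo G Dᶜ with hH
  set C := compOf H x₀ with hC0
  have hx₀C : x₀ ∈ C := self_mem_compOf H x₀
  have hCD : ∀ y ∈ C, y ∉ D := compOf_subset_compl hx₀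
  have hcl : ∀ {p q : V}, p ∈ C → H.Adj p q → q ∈ C := fun hp h => adj_mem_compOf hp h
  set n := C.ncard with hn
  have hn1 : 1 ≤ n := by
    rw [hn]
    have : 0 < C.ncard := (Set.ncard_pos (Set.toFinite C)).mpr ⟨x₀, hx₀C⟩
    omega
  set r := rootOf C with hr0
  have hrC : r ∈ C := by
    rw [hr0]
    exact Classical.epsilon_spec (p := fun y => y ∈ C) ⟨x₀, hx₀C⟩
  have hreach : ∀ v ∈ C, H.Reachable r v := fun v hv =>
    (mem_compOf.mp hrC).symm.trans (mem_compOf.mp hv)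
  -- parent map
  have hparent : ∀ v : V, ∃ u : V, v ∈ C → v ≠ r →
      H.Adj u v ∧ u ∈ C ∧ H.dist r u + 1 = H.dist r v := by
    intro v
    by_cases hv : v ∈ C ∧ v ≠ r
    · obtain ⟨hvC, hvr⟩ := hv
      have hre : H.Reachable v r := (hreach v hvC).symm
      obtain ⟨w, hw⟩ := hre.exists_walk_length_eq_dist
      obtain ⟨u, ha, p, rfl⟩ := SimpleGraph.Walk.exists_eq_cons_of_ne hvr w
      have huC : u ∈ C := hcl hvC ha
      refine ⟨u, fun _ _ => ⟨ha.symm, huC, ?_⟩⟩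
      rw [SimpleGraph.Walk.length_cons] at hw
      have hdu : H.dist r u ≤ p.length := by
        rw [SimpleGraph.dist_comm]; exact SimpleGraph.dist_le p
      have hdv : H.dist r v = H.dist v r := SimpleGraph.dist_comm ..
      have hup : H.dist r v ≤ H.dist r u + 1 := by
        obtain ⟨ω, hω⟩ := (hreach u huC).exists_walk_length_eq_dist
        have := SimpleGraph.dist_le (ω.concat ha.symm)
        rw [SimpleGraph.Walk.length_concat, hω] at this
        exact this
      omega
    · exact ⟨v, fun h1 h2 => absurd ⟨h1, h2⟩ hv⟩
  choose pm hpm using hparent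
  set P := (fun v => s(v, pm v)) '' (C \ {r}) with hP0
  set T := {e : Sym2 V | e ∈ G.edgeSet ∧ ∃ w ∈ C, w ∈ e} with hT0
  set I := {e : Sym2 V | e ∈ G.edgeSet ∧ ∀ z ∈ e, z ∈ C} with hI0
  set X := {e : Sym2 V | e ∈ G.edgeSet ∧ (∃ z ∈ e, z ∈ C) ∧ (∃ z ∈ e, z ∈ D)} with hX0
  have hTcard : T.ncard + 1 = 2 * n := hsp
  have hPI : P ⊆ I := by
    rintro e ⟨v, hv, rfl⟩
    obtain ⟨hadj, hvC', hdist⟩ := hpm v hv.1 hv.2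
    refine ⟨G.mem_edgeSet.mpr ((restrict_adj G D).mp hadj).1.symm, ?_⟩
    intro z hz
    rcases Sym2.mem_iff.mp hz with rfl | rfl
    exacts [hv.1, hvC']
  have hIsubT : I ⊆ T := by
    rintro e ⟨he, hall⟩
    refine ⟨he, ?_⟩
    induction e with
    | _ a b => exact ⟨a, hall a (by simp), by simp⟩
  have hXsubT : X ⊆ T := by
    rintro e ⟨he, ⟨z, hz, hzC⟩, -⟩
    exact ⟨he, z, hzC, hz⟩
  have hIX : Disjoint I X := by
    rw [Set.disjoint_left]
    rintro e ⟨-, hall⟩ ⟨-, -, z, hz, hzD⟩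
    exact hCD z (hall z hz) hzD
  have hdomex : ∀ v : V, ∃ d : V, v ∈ C → d ∈ D ∧ G.Adj d v := by
    intro v
    by_cases hv : v ∈ C
    · rcases hD v with h | ⟨u, hu, hadj⟩
      · exact absurd h (hCD v hv)
      · exact ⟨u, fun _ => ⟨hu, hadj⟩⟩
    · exact ⟨v, fun h => absurd h hv⟩
  choose dmv hdmv using hdomex
  have hXCsub : (fun v => s(v, dmv v)) '' C ⊆ X := by
    rintro e ⟨v, hv, rfl⟩
    obtain ⟨hd, hadj⟩ := hdmv v hv
    exact ⟨G.mem_edgeSet.mpr hadj.symm, ⟨v, by simp, hv⟩, ⟨dmv v, by simp, hd⟩⟩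
  have hXCinj : Set.InjOn (fun v => s(v, dmv v)) C := by
    intro a ha b hb hab
    rcases Sym2.eq_iff.mp hab with ⟨h1, -⟩ | ⟨h1, h2⟩
    · exact h1
    · exact absurd ((hdmv b hb).1) (h1 ▸ hCD a ha)
  have hXn : n ≤ X.ncard := by
    have h1 : ((fun v => s(v, dmv v)) '' C).ncard = C.ncard := Set.ncard_image_of_injOn hXCinj
    have h2 := Set.ncard_le_ncard hXCsub (Set.toFinite X)
    omega
  have hPinj : Set.InjOn (fun v => s(v, pm v)) (C \ {r}) := by
    intro a ha b hb hab
    obtain ⟨-, -, hda⟩ := hpm a ha.1 ha.2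
    obtain ⟨-, -, hdb⟩ := hpm b hb.1 hb.2
    rcases Sym2.eq_iff.mp hab with ⟨h1, -⟩ | ⟨h1, h2⟩
    · exact h1
    · exfalso
      rw [← h1] at hdb
      rw [h2] at hda
      omega
  have hPcard : P.ncard = n - 1 := by
    have h1 : P.ncard = (C \ {r}).ncard := by
      rw [hP0]; exact Set.ncard_image_of_injOn hPinj
    have h2 : (C \ {r}).ncard = C.ncard - 1 := Set.ncard_diff_singleton_of_mem hrC
    omega
  have hunion : I.ncard + X.ncard ≤ T.ncard := by
    rw [← Set.ncard_union_eq hIX (Set.toFinite I) (Set.toFinite X)]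
    exact Set.ncard_le_ncard (Set.union_subset hIsubT hXsubT) (Set.toFinite T)
  have hPle : n - 1 ≤ I.ncard := by
    rw [← hPcard]
    exact Set.ncard_le_ncard hPI (Set.toFinite I)
  -- uniqueness of D-neighbors
  have hUNIQ : ∀ v ∈ C, ∀ d₁ ∈ D, ∀ d₂ ∈ D, G.Adj d₁ v → G.Adj d₂ v → d₁ = d₂ := by
    intro v hv d₁ hd₁ d₂ hd₂ ha₁ ha₂
    by_contra hne12
    obtain ⟨d', hd', had', hdne⟩ : ∃ d', d' ∈ D ∧ G.Adj d' v ∧ d' ≠ dmv v := by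
      by_cases h1 : d₁ = dmv v
      · exact ⟨d₂, hd₂, ha₂, fun h => hne12 (h1.trans h.symm)⟩
      · exact ⟨d₁, hd₁, ha₁, h1⟩
    have hnew : s(v, d') ∈ X :=
      ⟨G.mem_edgeSet.mpr had'.symm, ⟨v, by simp, hv⟩, ⟨d', by simp, hd'⟩⟩
    have hnotin : s(v, d') ∉ (fun v => s(v, dmv v)) '' C := by
      rintro ⟨b, hb, hbe⟩
      rcases Sym2.eq_iff.mp hbe with ⟨h1, h2⟩ | ⟨h1, h2⟩
      · rw [h1] at h2; exact hdne h2.symm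
      · exact hCD b hb (by rw [h1]; exact hd')
    have hbig : n + 1 ≤ X.ncard := by
      have h1 : (insert s(v, d') ((fun v => s(v, dmv v)) '' C)).ncard =
          ((fun v => s(v, dmv v)) '' C).ncard + 1 :=
        Set.ncard_insert_of_notMem hnotin (Set.toFinite _)
      have h2 : insert s(v, d') ((fun v => s(v, dmv v)) '' C) ⊆ X :=
        Set.insert_subset hnew hXCsub
      have h3 := Set.ncard_le_ncard h2 (Set.toFinite X)
      rw [h1, Set.ncard_image_of_injOn hXCinj] at h3
      omega
    omega
  refine ⟨hUNIQ, ?_⟩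
  -- every inside edge is a parent edge
  have hIle : I.ncard ≤ n - 1 := by omega
  have hPeqI : P = I := Set.eq_of_subset_of_ncard_le hPI (by omega) (Set.toFinite I)
  have hkey : ∀ a b, a ∈ C → H.Adj a b →
      (H.dist r a + 1 = H.dist r b ∨ H.dist r b + 1 = H.dist r a) := by
    intro a b ha hab
    have hbC : b ∈ C := hcl ha hab
    have he : s(a, b) ∈ I := by
      refine ⟨G.mem_edgeSet.mpr ((restrict_adj G D).mp hab).1, ?_⟩
      intro z hz
      rcases Sym2.mem_iff.mp hz with rfl | rfl
      exacts [ha, hbC]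
    rw [← hPeqI] at he
    obtain ⟨v, hv, hveq⟩ := he
    obtain ⟨-, -, hdist⟩ := hpm v hv.1 hv.2
    rcases Sym2.eq_iff.mp hveq with ⟨h1, h2⟩ | ⟨h1, h2⟩
    · right; rw [← h1, ← h2]; exact hdist
    · left; rw [← h1, ← h2]; exact hdist
  intro a b ha hab
  have hbC : b ∈ C := hcl ha hab
  have hca : compOf H a = C := (compOf_eq (mem_compOf.mp ha)).symm
  have hcb : compOf H b = C := (compOf_eq (mem_compOf.mp hbC)).symm
  have hpra : pr G D a = H.dist r a % 2 := by
    unfold pr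
    rw [← hH, hca, ← hr0]
  have hprb : pr G D b = H.dist r b % 2 := by
    unfold pr
    rw [← hH, hcb, ← hr0]
  rw [hpra, hprb]
  rcases hkey a b ha hab with h | h <;> omega


lemma indep_lemma (G : SimpleGraph V) (φ : V → V) :
    ∀ (A : Finset V), (∀ a ∈ A, ∀ b ∈ A, a ≠ b → ¬ G.Adj a b → φ a = b ∨ φ b = a) →
    ∃ A' ⊆ A, A.card ≤ 3 * A'.card ∧ ∀ a ∈ A', ∀ b ∈ A', a ≠ b → G.Adj a b := by
  classical
  intro A
  induction A using Finset.strongInduction with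
  | _ A ih =>
    intro hA
    rcases A.eq_empty_or_nonempty with rfl | hne
    · exact ⟨∅, by simp⟩
    -- find a₀ with few bad neighbors
    have hmin : ∃ a₀ ∈ A, ((A.erase a₀).filter (fun b => ¬ G.Adj a₀ b)).card ≤ 2 := by
      by_contra hcon
      push_neg at hcon
      set Pairs := (A ×ˢ A).filter (fun p => p.1 ≠ p.2 ∧ ¬ G.Adj p.1 p.2) with hPairs
      have hup : Pairs.card ≤ 2 * A.card := by
        have hinj : Set.InjOn (fun p : V × V => if φ p.1 = p.2 then (p.1, true) else (p.2, false))
            ↑Pairs := by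
          intro p hp q hq hpq
          simp only [hPairs, Finset.coe_filter, Set.mem_setOf_eq, Finset.mem_product] at hp hq
          obtain ⟨⟨hp1, hp2⟩, hpne, hpadj⟩ := hp
          obtain ⟨⟨hq1, hq2⟩, hqne, hqadj⟩ := hq
          simp only at hpq
          by_cases h1 : φ p.1 = p.2 <;> by_cases h2 : φ q.1 = q.2
          · rw [if_pos h1, if_pos h2] at hpq
            have e1 : p.1 = q.1 := (Prod.mk.inj hpq).1
            exact Prod.ext e1 (by rw [← h1, ← h2, e1])
          · rw [if_pos h1, if_neg h2] at hpq
            exact absurd (Prod.mk.inj hpq).2 (by simp)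
          · rw [if_neg h1, if_pos h2] at hpq
            exact absurd (Prod.mk.inj hpq).2 (by simp)
          · rw [if_neg h1, if_neg h2] at hpq
            have e1 : p.2 = q.2 := (Prod.mk.inj hpq).1
            have hp' : φ p.2 = p.1 := (hA _ hp1 _ hp2 hpne hpadj).resolve_left h1
            have hq' : φ q.2 = q.1 := (hA _ hq1 _ hq2 hqne hqadj).resolve_left h2
            exact Prod.ext (by rw [← hp', ← hq', e1]) e1
        have hmaps : ∀ p ∈ Pairs,
            (if φ p.1 = p.2 then (p.1, true) else (p.2, false)) ∈ A ×ˢ ({true, false} : Finset Bool) := by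
          intro p hp
          simp only [hPairs, Finset.mem_filter, Finset.mem_product] at hp
          by_cases h : φ p.1 = p.2 <;> simp [h, hp.1.1, hp.1.2]
        have := Finset.card_le_card_of_injOn _ hmaps hinj
        have hcard2 : (A ×ˢ ({true, false} : Finset Bool)).card = 2 * A.card := by
          rw [Finset.card_product]
          simp [mul_comm]
        omega
      have hlow : 3 * A.card ≤ Pairs.card := by
        have hfib := Finset.card_eq_sum_card_fiberwise
          (f := fun p : V × V => p.1) (s := Pairs) (t := A)
          (fun p hp => by
            exact (Finset.mem_product.mp (Finset.mem_filter.mp hp).1).1)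
        have hfibge : ∀ a ∈ A, 3 ≤ (Pairs.filter (fun p => p.1 = a)).card := by
          intro a ha
          have h3 := hcon a ha
          have hinj2 : Set.InjOn (fun b => (a, b))
              (↑((A.erase a).filter (fun b => ¬ G.Adj a b)) : Set V) := by
            intro x _ y _ h
            exact (Prod.mk.injEq .. ▸ h).2
          have hmaps2 : ∀ b ∈ (A.erase a).filter (fun b => ¬ G.Adj a b),
              (a, b) ∈ Pairs.filter (fun p => p.1 = a) := by
            intro b hb
            simp only [Finset.mem_filter, Finset.mem_erase] at hb
            refine Finset.mem_filter.mpr ⟨Finset.mem_filter.mpr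
              ⟨Finset.mem_product.mpr ⟨ha, hb.1.2⟩, ?_, hb.2⟩, rfl⟩
            exact fun h => hb.1.1 h.symm
          have := Finset.card_le_card_of_injOn _ hmaps2 hinj2
          omega
        calc 3 * A.card = ∑ _a ∈ A, 3 := by rw [Finset.sum_const]; ring
        _ ≤ ∑ a ∈ A, (Pairs.filter (fun p => p.1 = a)).card := Finset.sum_le_sum hfibge
        _ = Pairs.card := hfib.symm
      have : A.card = 0 := by omega
      exact hne.card_pos.ne' this
    obtain ⟨a₀, ha₀, hdeg⟩ := hmin
    set B := insert a₀ ((A.erase a₀).filter (fun b => ¬ G.Adj a₀ b)) with hB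
    have hssub : A \ B ⊂ A := by
      refine Finset.sdiff_ssubset ?_ ?_
      · intro x hx
        rw [hB] at hx
        rcases Finset.mem_insert.mp hx with rfl | hx
        · exact ha₀
        · exact Finset.mem_of_mem_erase (Finset.mem_of_mem_filter _ hx)
      · exact ⟨a₀, by simp [hB]⟩
    obtain ⟨A'', hsub'', hcard'', hind''⟩ := ih (A \ B) hssub
      (fun a ha b hb hne' hnadj => hA a (Finset.mem_sdiff.mp ha).1 b (Finset.mem_sdiff.mp hb).1 hne' hnadj)
    have ha₀notin : a₀ ∉ A'' := fun h => by
      have := hsub'' h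
      rw [Finset.mem_sdiff] at this
      exact this.2 (by simp [hB])
    refine ⟨insert a₀ A'', ?_, ?_, ?_⟩
    · intro x hx
      rcases Finset.mem_insert.mp hx with rfl | hx
      · exact ha₀
      · exact (Finset.mem_sdiff.mp (hsub'' hx)).1
    · have hBcard : B.card ≤ 3 := by
        rw [hB]
        have := Finset.card_insert_le a₀ ((A.erase a₀).filter (fun b => ¬ G.Adj a₀ b))
        omega
      have h1 : A.card ≤ (A \ B).card + B.card := by
        have := Finset.le_card_sdiff B A
        omega
      rw [Finset.card_insert_of_notMem ha₀notin]
      omega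
    · have hstep : ∀ b ∈ A'', G.Adj a₀ b := by
        intro b hb
        by_contra hnadj
        have hbA : b ∈ A \ B := hsub'' hb
        rw [Finset.mem_sdiff] at hbA
        refine hbA.2 ?_
        rw [hB]
        refine Finset.mem_insert_of_mem (Finset.mem_filter.mpr
          ⟨Finset.mem_erase.mpr ⟨?_, hbA.1⟩, hnadj⟩)
        intro h; rw [h] at hb; exact ha₀notin hb
      intro a ha b hb hne'
      rcases Finset.mem_insert.mp ha with ha' | ha'
      · rcases Finset.mem_insert.mp hb with hb' | hb'
        · exact absurd (ha'.trans hb'.symm) hne'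
        · rw [ha']; exact hstep b hb'
      · rcases Finset.mem_insert.mp hb with hb' | hb'
        · rw [hb']; exact (hstep a ha').symm
        · exact hind'' a ha' b hb' hne'


lemma six_distinct (s : Finset V) (h : 6 ≤ s.card) :
    ∃ x1 x2 x3 x4 x5 x6 : V, x1 ∈ s ∧ x2 ∈ s ∧ x3 ∈ s ∧ x4 ∈ s ∧ x5 ∈ s ∧ x6 ∈ s ∧
    x1 ≠ x2 ∧ x1 ≠ x3 ∧ x1 ≠ x4 ∧ x1 ≠ x5 ∧ x1 ≠ x6 ∧ x2 ≠ x3 ∧ x2 ≠ x4 ∧ x2 ≠ x5 ∧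
    x2 ≠ x6 ∧ x3 ≠ x4 ∧ x3 ≠ x5 ∧ x3 ≠ x6 ∧ x4 ≠ x5 ∧ x4 ≠ x6 ∧ x5 ≠ x6 := by
  classical
  obtain ⟨x1, h1⟩ := Finset.card_pos.mp (by omega : 0 < s.card)
  have hc1 : 5 ≤ (s.erase x1).card := by
    rw [Finset.card_erase_of_mem h1]; omega
  obtain ⟨x2, h2⟩ := Finset.card_pos.mp (by omega : 0 < (s.erase x1).card)
  have hc2 : 4 ≤ ((s.erase x1).erase x2).card := by
    rw [Finset.card_erase_of_mem h2]; omega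
  obtain ⟨x3, h3⟩ := Finset.card_pos.mp (by omega : 0 < ((s.erase x1).erase x2).card)
  have hc3 : 3 ≤ (((s.erase x1).erase x2).erase x3).card := by
    rw [Finset.card_erase_of_mem h3]; omega
  obtain ⟨x4, h4⟩ := Finset.card_pos.mp
    (by omega : 0 < (((s.erase x1).erase x2).erase x3).card)
  have hc4 : 2 ≤ ((((s.erase x1).erase x2).erase x3).erase x4).card := by
    rw [Finset.card_erase_of_mem h4]; omega
  obtain ⟨x5, h5⟩ := Finset.card_pos.mp
    (by omega : 0 < ((((s.erase x1).erase x2).erase x3).erase x4).card)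
  have hc5 : 1 ≤ (((((s.erase x1).erase x2).erase x3).erase x4).erase x5).card := by
    rw [Finset.card_erase_of_mem h5]; omega
  obtain ⟨x6, h6⟩ := Finset.card_pos.mp
    (by omega : 0 < (((((s.erase x1).erase x2).erase x3).erase x4).erase x5).card)
  simp only [Finset.mem_erase] at h2 h3 h4 h5 h6
  exact ⟨x1, x2, x3, x4, x5, x6, h1, h2.2, h3.2.2, h4.2.2.2, h5.2.2.2.2, h6.2.2.2.2.2,
    (h2.1 ∘ Eq.symm), (h3.2.1 ∘ Eq.symm), (h4.2.2.1 ∘ Eq.symm), (h5.2.2.2.1 ∘ Eq.symm),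
    (h6.2.2.2.2.1 ∘ Eq.symm),
    (h3.1 ∘ Eq.symm), (h4.2.1 ∘ Eq.symm), (h5.2.2.1 ∘ Eq.symm), (h6.2.2.2.1 ∘ Eq.symm),
    (h4.1 ∘ Eq.symm), (h5.2.1 ∘ Eq.symm), (h6.2.2.1 ∘ Eq.symm),
    (h5.1 ∘ Eq.symm), (h6.2.1 ∘ Eq.symm),
    (h6.1 ∘ Eq.symm)⟩

lemma pr_lt_two [Nonempty V] (G : SimpleGraph V) (D : Set V) (x : V) : pr G D x < 2 := by
  unfold pr; omega


end Claim7

open Claim7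

/-- Claim 7 (core neighborhoods): in a rainbow `C₄`-saturated graph `G` with a
dominating set `D`, there is a set `S ⊆ D` with `|S| ≤ 35` such that either every
vertex of `L` has a neighbor in `S`, or every sparse component `C` of `G[V ∖ D]`
not contained in `N(S)` meets `N(S)` in at least 5 vertices. -/
theorem rainbow_sat_C4_core_nbhds {V : Type*} [Fintype V] (G : SimpleGraph V)
    (hG : RainbowSat G 4) (D : Set V) (hD : ∀ v, v ∈ D ∨ ∃ u ∈ D, G.Adj u v) :
    ∃ S ⊆ D, S.ncard ≤ 35 ∧
      ((∀ w ∈ Lset G D, ∃ s ∈ S, G.Adj s w) ∨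
        (∀ x, x ∉ D → SparseComp G (compOf (restrictTo G Dᶜ) x) →
          ¬ (compOf (restrictTo G Dᶜ) x ⊆ {w | ∃ s ∈ S, G.Adj s w}) →
          5 ≤ (compOf (restrictTo G Dᶜ) x ∩ {w | ∃ s ∈ S, G.Adj s w}).ncard)) := by
  classical
  set H := restrictTo G Dᶜ with hH
  have hdom : ∀ v : V, ∃ d : V, v ∉ D → d ∈ D ∧ G.Adj d v := by
    intro v
    by_cases hv : v ∈ D
    · exact ⟨v, fun h => absurd hv h⟩
    · rcases hD v with h | ⟨u, hu, h⟩
      · exact absurd h hv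
      · exact ⟨u, fun _ => ⟨hu, h⟩⟩
  choose dm hdm using hdom
  set S₀ := dm '' (Lset G D) with hS₀
  have hS₀D : S₀ ⊆ D := by
    rintro s ⟨w, hw, rfl⟩
    exact (hdm w hw.1).1
  by_cases hcard : S₀.ncard ≤ 35
  · refine ⟨S₀, hS₀D, hcard, Or.inl ?_⟩
    intro w hw
    exact ⟨dm w, Set.mem_image_of_mem dm hw, (hdm w hw.1).2⟩
  · exfalso
    push_neg at hcard
    have h36 : 36 ≤ S₀.ncard := hcard
    have hS₀ne : S₀.Nonempty := by
      rw [← Set.ncard_pos (Set.toFinite S₀)]; omega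
    haveI : Nonempty V := ⟨hS₀ne.some⟩
    -- leaf structure
    have hLeaf : ∀ w : V, ∃ a : V, w ∈ Lset G D →
        ((∀ u, G.Adj u w → u ∈ D → u = dm w) ∧
          a ∉ D ∧ G.Adj a w ∧ a ∈ compOf H w ∧ (∀ u, G.Adj u w → u ∉ D → u = a)) := by
      intro w
      by_cases hw : w ∈ Lset G D
      swap
      · exact ⟨w, fun h => absurd h hw⟩
      obtain ⟨hwD, hwsp, hwdeg⟩ := hw
      have hUNIQ := (sparse_struct G D hD hwD hwsp).1
      have hwC : w ∈ compOf H w := self_mem_compOf H w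
      have hdmw := hdm w hwD
      have hDuniq : ∀ u, G.Adj u w → u ∈ D → u = dm w := by
        intro u hu huD
        exact hUNIQ w hwC u huD (dm w) hdmw.1 hu hdmw.2
      have hsplit : (G.neighborSet w ∩ D) ∪ (G.neighborSet w ∩ Dᶜ) = G.neighborSet w := by
        rw [← Set.inter_union_distrib_left]; simp
      have hdisj : Disjoint (G.neighborSet w ∩ D) (G.neighborSet w ∩ Dᶜ) := by
        rw [Set.disjoint_left]
        rintro u ⟨-, huD⟩ ⟨-, huDc⟩
        exact huDc huD
      have hDcard : (G.neighborSet w ∩ D).ncard = 1 := by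
        rw [Set.ncard_eq_one]
        refine ⟨dm w, Set.eq_singleton_iff_unique_mem.mpr ⟨⟨hdmw.2.symm, hdmw.1⟩, ?_⟩⟩
        rintro u ⟨hu, huD⟩
        exact hDuniq u (G.mem_neighborSet w u |>.mp hu).symm huD
      have hunion := Set.ncard_union_eq hdisj (Set.toFinite _) (Set.toFinite _)
      rw [hsplit] at hunion
      have hDccard : (G.neighborSet w ∩ Dᶜ).ncard = 1 := by
        rw [hwdeg, hDcard] at hunion
        omega
      rw [Set.ncard_eq_one] at hDccard
      obtain ⟨a, ha⟩ := hDccard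
      have haw : a ∈ G.neighborSet w ∩ Dᶜ := by rw [ha]; exact rfl
      have hGwa : G.Adj w a := haw.1
      refine ⟨a, fun _ => ⟨hDuniq, haw.2, hGwa.symm, ?_, ?_⟩⟩
      · exact adj_mem_compOf hwC ((restrict_adj G D).mpr ⟨hGwa, hwD, haw.2⟩)
      · intro u hu huD
        have : u ∈ G.neighborSet w ∩ Dᶜ := ⟨hu.symm, huD⟩
        rw [ha] at this
        exact this
    choose am ham using hLeaf
    -- a set of 36 distinct dominators
    obtain ⟨T, hTsub, hTcard⟩ : ∃ T : Finset V, (↑T : Set V) ⊆ S₀ ∧ T.card = 36 := by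
      have hfin : S₀.Finite := Set.toFinite _
      have : 36 ≤ hfin.toFinset.card := by
        rw [← Set.ncard_eq_toFinset_card S₀ hfin]; exact h36
      obtain ⟨T, hT1, hT2⟩ := Finset.exists_subset_card_eq this
      refine ⟨T, ?_, hT2⟩
      intro d hd
      have := hT1 hd
      rwa [Set.Finite.mem_toFinset] at this
    have hwex : ∀ d : V, ∃ w : V, d ∈ T → (w ∈ Lset G D ∧ dm w = d) := by
      intro d
      by_cases hd : d ∈ T
      · obtain ⟨w, hw, hwd⟩ := hTsub hd
        exact ⟨w, fun _ => ⟨hw, hwd⟩⟩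
      · exact ⟨d, fun h => absurd h hd⟩
    choose wt hwt using hwex
    -- majority parity class
    obtain ⟨T₁, hT₁sub, hT₁card, hT₁par⟩ : ∃ T₁ : Finset V, T₁ ⊆ T ∧ 18 ≤ T₁.card ∧
        ∀ d ∈ T₁, ∀ d' ∈ T₁, pr G D (wt d) = pr G D (wt d') := by
      have hsum : (T.filter (fun d => pr G D (wt d) = 0)).card +
          (T.filter (fun d => ¬ pr G D (wt d) = 0)).card = T.card :=
        Finset.card_filter_add_card_filter_not (fun d => pr G D (wt d) = 0)
      by_cases hbig : 18 ≤ (T.filter (fun d => pr G D (wt d) = 0)).card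
      · refine ⟨_, Finset.filter_subset _ _, hbig, ?_⟩
        intro d hd d' hd'
        have h1 := (Finset.mem_filter.mp hd).2
        have h2 := (Finset.mem_filter.mp hd').2
        omega
      · refine ⟨T.filter (fun d => ¬ pr G D (wt d) = 0), Finset.filter_subset _ _, ?_, ?_⟩
        · omega
        · intro d hd d' hd'
          have h1 := (Finset.mem_filter.mp hd).2
          have h2 := (Finset.mem_filter.mp hd').2
          have l1 := pr_lt_two G D (wt d)
          have l2 := pr_lt_two G D (wt d')
          omega
    -- the key dichotomy for non-adjacent dominator pairs
    have hkey : ∀ d ∈ T₁, ∀ d' ∈ T₁, d ≠ d' → ¬ G.Adj d d' →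
        dm (am (wt d)) = d' ∨ dm (am (wt d')) = d := by
      intro d hd d' hd' hdd hnadj
      have hdT : d ∈ T := hT₁sub hd
      have hd'T : d' ∈ T := hT₁sub hd'
      have hdD : d ∈ D := hS₀D (hTsub hdT)
      have hd'D : d' ∈ D := hS₀D (hTsub hd'T)
      obtain ⟨hwL, hwdm⟩ := hwt d hdT
      obtain ⟨hw'L, hw'dm⟩ := hwt d' hd'T
      obtain ⟨hDuniq, haD, haw, haC, haDc⟩ := ham (wt d) hwL
      obtain ⟨hDuniq', haD', haw', haC', haDc'⟩ := ham (wt d') hw'L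
      have hwD : wt d ∉ D := hwL.1
      have hw'D : wt d' ∉ D := hw'L.1
      have hwne : wt d ≠ wt d' := fun h => hdd (by rw [← hwdm, ← hw'dm, h])
      have hPAR := (sparse_struct G D hD hwL.1 hwL.2.1).2
      have hPAR' := (sparse_struct G D hD hw'L.1 hw'L.2.1).2
      have hpar := hT₁par d hd d' hd'
      have hwnadj : ¬ G.Adj (wt d) (wt d') := by
        intro hadj
        have hHadj : H.Adj (wt d) (wt d') := (restrict_adj G D).mpr ⟨hadj, hwD, hw'D⟩
        exact hPAR (wt d) (wt d') (self_mem_compOf H (wt d)) hHadj hpar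
      obtain ⟨u, v, h1, h2, h3⟩ := path3 G hG hwne hwnadj
      have hu : u = d ∨ u = am (wt d) := by
        by_cases huD : u ∈ D
        · left; rw [← hwdm]; exact hDuniq u h1.symm huD
        · right; exact haDc u h1.symm huD
      have hv : v = d' ∨ v = am (wt d') := by
        by_cases hvD : v ∈ D
        · left; rw [← hw'dm]; exact hDuniq' v h3 hvD
        · right; exact haDc' v h3 hvD
      have hUNIQ := (sparse_struct G D hD hwL.1 hwL.2.1).1
      have hUNIQ' := (sparse_struct G D hD hw'L.1 hw'L.2.1).1
      rcases hu with hu' | hu' <;> rcases hv with hv' | hv'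
      · rw [hu', hv'] at h2
        exact absurd h2 hnadj
      · -- edge d ~ a' : dm a' = d
        right
        rw [hu', hv'] at h2
        have hdma' := hdm (am (wt d')) haD'
        exact hUNIQ' (am (wt d')) haC' (dm (am (wt d'))) hdma'.1 d hdD hdma'.2 h2
      · -- edge a ~ d' : dm a = d'
        left
        rw [hu', hv'] at h2
        have hdma := hdm (am (wt d)) haD
        exact hUNIQ (am (wt d)) haC (dm (am (wt d))) hdma.1 d' hd'D hdma.2 h2.symm
      · -- edge a ~ a' : parity contradiction
        exfalso
        rw [hu', hv'] at h2
        have hHaa : H.Adj (am (wt d)) (am (wt d')) := (restrict_adj G D).mpr ⟨h2, haD, haD'⟩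
        have p1 := hPAR (am (wt d)) (am (wt d')) haC hHaa
        have p2 := hPAR (wt d) (am (wt d)) (self_mem_compOf H (wt d))
          ((restrict_adj G D).mpr ⟨haw.symm, hwD, haD⟩)
        have p3 := hPAR' (wt d') (am (wt d')) (self_mem_compOf H (wt d'))
          ((restrict_adj G D).mpr ⟨haw'.symm, hw'D, haD'⟩)
        have l1 := pr_lt_two G D (wt d)
        have l2 := pr_lt_two G D (wt d')
        have l3 := pr_lt_two G D (am (wt d))
        have l4 := pr_lt_two G D (am (wt d'))
        omega
    -- extract 6 pairwise adjacent dominators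
    obtain ⟨A', hA'sub, hA'card, hA'adj⟩ :=
      indep_lemma G (fun d => dm (am (wt d))) T₁ hkey
    have h6 : 6 ≤ A'.card := by omega
    obtain ⟨x1, x2, x3, x4, x5, x6, m1, m2, m3, m4, m5, m6,
      n12, n13, n14, n15, n16, n23, n24, n25, n26, n34, n35, n36, n45, n46, n56⟩ :=
      six_distinct A' h6
    obtain ⟨c, hc, hnc⟩ := hG.1
    apply hnc
    exact rainbow_of_common G c hc n12
      n34 n35 n36 n45 n46 n56
      (hA'adj x1 m1 x3 m3 n13) (hA'adj x1 m1 x4 m4 n14)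
      (hA'adj x1 m1 x5 m5 n15) (hA'adj x1 m1 x6 m6 n16)
      (hA'adj x2 m2 x3 m3 n23) (hA'adj x2 m2 x4 m4 n24)
      (hA'adj x2 m2 x5 m5 n25) (hA'adj x2 m2 x6 m6 n26)
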